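/- Let p ≥ 1 and let T_p be the triangle-path graph. Then: (i) every vertex cover of T_p has at least 2p vertices; (ii) every vertex cover of T_p containing all of a_1,…,a_p has at least 2p + 1 vertices; (iii) for every s* ∈ {1,…,p}, the set {a_s : 1 ≤ s ≤ p, s ≠ s*} ∪ {b_{2s} : 1 ≤ s ≤ s*} ∪ {b_{2s+1} : s* ≤ s ≤ p} is a vertex cover of T_p of size exactly 2p. -/

import Mathlib

/-- Vertex set of the triangle-path graph `T_p`: the `a`-vertices `a_1, …, a_p`
(0-indexed: `Sum.inl s` is `a_{s+1}`) and the `b`-vertices `b_1, …, b_{2p+2}`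
(0-indexed: `Sum.inr i` is `b_{i+1}`). -/
abbrev TPV (p : ℕ) : Type := Fin p ⊕ Fin (2 * p + 2)

/-- The edges of `T_p` (as a relation, to be symmetrized): `{b_i, b_{i+1}}` for
`1 ≤ i ≤ 2p+1`, and `{a_s, b_{2s}}`, `{a_s, b_{2s+1}}` for `1 ≤ s ≤ p` (0-indexed:
`a_{s0}`—`b_j` for `j = 2 s0 + 1` or `j = 2 s0 + 2`). -/
def TPRel (p : ℕ) : TPV p → TPV p → Prop
  | Sum.inr i, Sum.inr j => (j : ℕ) = (i : ℕ) + 1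
  | Sum.inl s, Sum.inr j => (j : ℕ) = 2 * (s : ℕ) + 1 ∨ (j : ℕ) = 2 * (s : ℕ) + 2
  | _, _ => False

/-- The triangle-path graph `T_p`. -/
def trianglePath (p : ℕ) : SimpleGraph (TPV p) := SimpleGraph.fromRel (TPRel p)

/-- A vertex cover: a set of vertices containing at least one endpoint of every edge. -/
def IsVertexCover {α : Type*} (G : SimpleGraph α) (C : Set α) : Prop :=
  ∀ ⦃x y : α⦄, G.Adj x y → x ∈ C ∨ y ∈ C

/-- For `s* ∈ [p]` (0-indexed as `t`), the set
`{a_s : s ≠ s*} ∪ {b_{2s} : 1 ≤ s ≤ s*} ∪ {b_{2s+1} : s* ≤ s ≤ p}` (in 0-indexed terms: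
the odd `b`-indices `≤ 2t+1` and the even `b`-indices in `[2t+2, 2p]`). -/
def tpCover (p : ℕ) (t : Fin p) : Set (TPV p) :=
  fun x => Sum.elim (fun s => s ≠ t)
    (fun j => ((j : ℕ) % 2 = 1 ∧ (j : ℕ) ≤ 2 * (t : ℕ) + 1) ∨
      ((j : ℕ) % 2 = 0 ∧ 2 * (t : ℕ) + 2 ≤ (j : ℕ) ∧ (j : ℕ) ≤ 2 * p)) x

/-- Membership in `tpCover` for `b`-vertices. -/
lemma mem_tpCover_inr {p : ℕ} (t : Fin p) (j : Fin (2 * p + 2)) :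
    (Sum.inr j : TPV p) ∈ tpCover p t ↔
      ((j : ℕ) % 2 = 1 ∧ (j : ℕ) ≤ 2 * (t : ℕ) + 1) ∨
      ((j : ℕ) % 2 = 0 ∧ 2 * (t : ℕ) + 2 ≤ (j : ℕ) ∧ (j : ℕ) ≤ 2 * p) := Iff.rfl

/-- Membership in `tpCover` for `a`-vertices. -/
lemma mem_tpCover_inl {p : ℕ} (t : Fin p) (s : Fin p) :
    (Sum.inl s : TPV p) ∈ tpCover p t ↔ s ≠ t := Iff.rfl

/-- Adjacency in `trianglePath` from `TPRel`. -/
lemma tp_adj {p : ℕ} {x y : TPV p} (hne : x ≠ y) (h : TPRel p x y) :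
    (trianglePath p).Adj x y := by
  rw [trianglePath, SimpleGraph.fromRel_adj]
  exact ⟨hne, Or.inl h⟩

/-- Enumeration of `tpCover p t`. -/
def coverFun (p : ℕ) (t : Fin p) (x : {s : Fin p // s ≠ t} ⊕ Fin (p + 1)) : TPV p :=
  match x with
  | Sum.inl s => Sum.inl s.1
  | Sum.inr k =>
      if (k : ℕ) ≤ (t : ℕ) then
        Sum.inr ⟨2 * (k : ℕ) + 1, by have := t.isLt; have := k.isLt; omega⟩
      else
        Sum.inr ⟨2 * (k : ℕ), by have := k.isLt; omega⟩

lemma coverFun_inj (p : ℕ) (t : Fin p) : Function.Injective (coverFun p t) := by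
  intro x y h
  match x, y with
  | Sum.inl a, Sum.inl b =>
    simp only [coverFun, Sum.inl.injEq] at h
    exact congrArg Sum.inl (Subtype.ext h)
  | Sum.inl a, Sum.inr k =>
    exfalso; simp only [coverFun] at h; split at h <;> simp at h
  | Sum.inr k, Sum.inl a =>
    exfalso; simp only [coverFun] at h; split at h <;> simp at h
  | Sum.inr k, Sum.inr l =>
    simp only [coverFun] at h
    split at h <;> split at h <;>
      simp only [Sum.inr.injEq, Fin.mk.injEq] at h <;>
      · congr 1; exact Fin.ext (by omega)

lemma coverFun_range (p : ℕ) (t : Fin p) :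
    Set.range (coverFun p t) = tpCover p t := by
  ext x
  constructor
  · rintro ⟨y, rfl⟩
    match y with
    | Sum.inl s =>
      exact (mem_tpCover_inl t s.1).mpr s.2
    | Sum.inr k =>
      have hk := k.isLt
      have ht := t.isLt
      by_cases h : (k : ℕ) ≤ (t : ℕ)
      · simp only [coverFun, h, if_true]
        exact Or.inl ⟨by show (2 * (k : ℕ) + 1) % 2 = 1; omega,
          by show 2 * (k : ℕ) + 1 ≤ 2 * (t : ℕ) + 1; omega⟩
      · simp only [coverFun, h, if_false]
        exact Or.inr ⟨by show (2 * (k : ℕ)) % 2 = 0; omega,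
          by show 2 * (t : ℕ) + 2 ≤ 2 * (k : ℕ); omega,
          by show 2 * (k : ℕ) ≤ 2 * p; omega⟩
  · intro hx
    match x with
    | Sum.inl s =>
      have hs : s ≠ t := hx
      exact ⟨Sum.inl ⟨s, hs⟩, rfl⟩
    | Sum.inr j =>
      have hj : ((j : ℕ) % 2 = 1 ∧ (j : ℕ) ≤ 2 * (t : ℕ) + 1) ∨
          ((j : ℕ) % 2 = 0 ∧ 2 * (t : ℕ) + 2 ≤ (j : ℕ) ∧ (j : ℕ) ≤ 2 * p) := hx
      have hjlt := j.isLt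
      refine ⟨Sum.inr ⟨(j : ℕ) / 2, by omega⟩, ?_⟩
      rcases hj with ⟨h1, h2⟩ | ⟨h1, h2, h3⟩
      · have hc : ((j : ℕ) / 2) ≤ (t : ℕ) := by omega
        simp only [coverFun, hc, if_true]
        congr 1
        exact Fin.ext (by simp; omega)
      · have hc : ¬ ((j : ℕ) / 2 ≤ (t : ℕ)) := by omega
        simp only [coverFun, hc, if_false]
        congr 1
        exact Fin.ext (by simp; omega)

/-- For `p ≥ 1`: (i) every vertex cover of `T_p` has at least `2p`
vertices; (ii) every vertex cover containing all of `a_1, …, a_p` has at least `2p + 1`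
vertices; (iii) for every `s* ∈ [p]` the set `tpCover p s*` is a vertex cover of `T_p`
of size exactly `2p`. -/
theorem stmt_11 (p : ℕ) (hp : 1 ≤ p) :
    (∀ C : Set (TPV p), IsVertexCover (trianglePath p) C → 2 * p ≤ C.ncard) ∧
    (∀ C : Set (TPV p), IsVertexCover (trianglePath p) C →
      (∀ s : Fin p, Sum.inl s ∈ C) → 2 * p + 1 ≤ C.ncard) ∧
    (∀ t : Fin p,
      IsVertexCover (trianglePath p) (tpCover p t) ∧ (tpCover p t).ncard = 2 * p) := by
  classical
  refine ⟨?_, ?_, ?_⟩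
  · -- part (i)
    intro C hC
    set F := C.toFinset with hFdef
    have hmem : ∀ x, x ∈ F ↔ x ∈ C := fun x => Set.mem_toFinset
    set T : Fin p → Finset (TPV p) := fun s =>
      {Sum.inl s, Sum.inr ⟨2 * (s : ℕ) + 1, by have := s.isLt; omega⟩,
        Sum.inr ⟨2 * (s : ℕ) + 2, by have := s.isLt; omega⟩} with hT
    have htri : ∀ s : Fin p, 2 ≤ (F ∩ T s).card := by
      intro s
      have hs := s.isLt
      set b1 : TPV p := Sum.inr ⟨2 * (s : ℕ) + 1, by omega⟩ with hb1
      set b2 : TPV p := Sum.inr ⟨2 * (s : ℕ) + 2, by omega⟩ with hb2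
      have hb12 : b1 ≠ b2 := by simp [hb1, hb2, Fin.ext_iff]
      have h1 : Sum.inl s ∈ C ∨ b1 ∈ C := hC (tp_adj (by simp [hb1]) (Or.inl rfl))
      have h2 : Sum.inl s ∈ C ∨ b2 ∈ C := hC (tp_adj (by simp [hb2]) (Or.inr rfl))
      have h3 : b1 ∈ C ∨ b2 ∈ C := hC (tp_adj hb12 (by simp [hb1, hb2, TPRel]))
      apply Finset.one_lt_card.mpr
      have hmT : Sum.inl s ∈ T s ∧ b1 ∈ T s ∧ b2 ∈ T s := by
        refine ⟨?_, ?_, ?_⟩ <;> simp [hT, hb1, hb2]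
      rcases h1 with ha | hb1c
      · rcases h3 with hc | hc
        · exact ⟨Sum.inl s, by simp [Finset.mem_inter, hmem, ha, hmT.1],
            b1, by simp [Finset.mem_inter, hmem, hc, hmT.2.1], by simp [hb1]⟩
        · exact ⟨Sum.inl s, by simp [Finset.mem_inter, hmem, ha, hmT.1],
            b2, by simp [Finset.mem_inter, hmem, hc, hmT.2.2], by simp [hb2]⟩
      · rcases h2 with ha | hb2c
        · exact ⟨Sum.inl s, by simp [Finset.mem_inter, hmem, ha, hmT.1],
            b1, by simp [Finset.mem_inter, hmem, hb1c, hmT.2.1], by simp [hb1]⟩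
        · exact ⟨b1, by simp [Finset.mem_inter, hmem, hb1c, hmT.2.1],
            b2, by simp [Finset.mem_inter, hmem, hb2c, hmT.2.2], hb12⟩
    have hdisj : ∀ x ∈ (Finset.univ : Finset (Fin p)), ∀ y ∈ Finset.univ, x ≠ y →
        Disjoint (F ∩ T x) (F ∩ T y) := by
      intro x _ y _ hxy
      rw [Finset.disjoint_left]
      intro z hzx hzy
      have h1 : z ∈ T x := (Finset.mem_inter.mp hzx).2
      have h2 : z ∈ T y := (Finset.mem_inter.mp hzy).2
      simp only [hT, Finset.mem_insert, Finset.mem_singleton] at h1 h2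
      have hxy' : (x : ℕ) ≠ (y : ℕ) := fun h => hxy (Fin.ext h)
      rcases h1 with h1 | h1 | h1 <;> rcases h2 with h2 | h2 | h2 <;>
        rw [h1] at h2 <;> simp [Fin.ext_iff] at h2 <;> omega
    calc 2 * p = ∑ _s : Fin p, 2 := by simp [mul_comm]
      _ ≤ ∑ s : Fin p, (F ∩ T s).card :=
          Finset.sum_le_sum fun s _ => htri s
      _ = (Finset.univ.biUnion fun s => F ∩ T s).card :=
          (Finset.card_biUnion hdisj).symm
      _ ≤ F.card := Finset.card_le_card (by
          intro z hz
          rcases Finset.mem_biUnion.mp hz with ⟨s, _, hzs⟩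
          exact (Finset.mem_inter.mp hzs).1)
      _ = C.ncard := (Set.ncard_eq_toFinset_card' C).symm
  · -- part (ii)
    intro C hC hA
    set F := C.toFinset with hFdef
    have hmem : ∀ x, x ∈ F ↔ x ∈ C := fun x => Set.mem_toFinset
    set A : Finset (TPV p) := Finset.univ.image (Sum.inl : Fin p → TPV p) with hAdef
    set P : Fin (p + 1) → Finset (TPV p) := fun k =>
      {Sum.inr ⟨2 * (k : ℕ), by have := k.isLt; omega⟩,
        Sum.inr ⟨2 * (k : ℕ) + 1, by have := k.isLt; omega⟩} with hP
    have hAsub : A ⊆ F := by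
      intro x hx
      rcases Finset.mem_image.mp hx with ⟨s, _, rfl⟩
      exact (hmem _).mpr (hA s)
    have hPone : ∀ k : Fin (p + 1), 1 ≤ (F ∩ P k).card := by
      intro k
      have hk := k.isLt
      have hedge : (Sum.inr ⟨2 * (k : ℕ), by omega⟩ : TPV p) ∈ C ∨
          (Sum.inr ⟨2 * (k : ℕ) + 1, by omega⟩ : TPV p) ∈ C :=
        hC (tp_adj (by simp [Fin.ext_iff]) (by simp [TPRel]))
      apply Finset.card_pos.mpr
      rcases hedge with h | h
      · exact ⟨_, Finset.mem_inter.mpr ⟨(hmem _).mpr h, by simp [hP]⟩⟩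
      · exact ⟨_, Finset.mem_inter.mpr ⟨(hmem _).mpr h, by simp [hP]⟩⟩
    have hPdisj : ∀ x ∈ (Finset.univ : Finset (Fin (p+1))), ∀ y ∈ Finset.univ, x ≠ y →
        Disjoint (F ∩ P x) (F ∩ P y) := by
      intro x _ y _ hxy
      rw [Finset.disjoint_left]
      intro z hzx hzy
      have h1 : z ∈ P x := (Finset.mem_inter.mp hzx).2
      have h2 : z ∈ P y := (Finset.mem_inter.mp hzy).2
      simp only [hP, Finset.mem_insert, Finset.mem_singleton] at h1 h2
      have hxy' : (x : ℕ) ≠ (y : ℕ) := fun h => hxy (Fin.ext h)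
      rcases h1 with h1 | h1 <;> rcases h2 with h2 | h2 <;>
        rw [h1] at h2 <;> simp [Fin.ext_iff] at h2 <;> omega
    set B : Finset (TPV p) := Finset.univ.biUnion fun k => F ∩ P k with hBdef
    have hBsub : B ⊆ F := by
      intro z hz
      rcases Finset.mem_biUnion.mp hz with ⟨k, _, hzk⟩
      exact (Finset.mem_inter.mp hzk).1
    have hABdisj : Disjoint A B := by
      rw [Finset.disjoint_left]
      intro z hzA hzB
      rcases Finset.mem_image.mp hzA with ⟨s, _, rfl⟩
      rcases Finset.mem_biUnion.mp hzB with ⟨k, _, hzk⟩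
      have := (Finset.mem_inter.mp hzk).2
      simp [hP] at this
    have hAcard : A.card = p := by
      rw [hAdef, Finset.card_image_of_injective _ Sum.inl_injective, Finset.card_univ,
        Fintype.card_fin]
    have hBcard : p + 1 ≤ B.card := by
      rw [hBdef, Finset.card_biUnion hPdisj]
      calc p + 1 = ∑ _k : Fin (p + 1), 1 := by simp
        _ ≤ ∑ k : Fin (p + 1), (F ∩ P k).card := Finset.sum_le_sum fun k _ => hPone k
    calc 2 * p + 1 = p + (p + 1) := by ring
      _ ≤ A.card + B.card := by omega
      _ = (A ∪ B).card := (Finset.card_union_of_disjoint hABdisj).symm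
      _ ≤ F.card := Finset.card_le_card (Finset.union_subset hAsub hBsub)
      _ = C.ncard := (Set.ncard_eq_toFinset_card' C).symm
  · -- part (iii)
    intro t
    have ht := t.isLt
    constructor
    · intro x y hxy
      rw [trianglePath, SimpleGraph.fromRel_adj] at hxy
      obtain ⟨hne, hrel⟩ := hxy
      have key : ∀ u v : TPV p, TPRel p u v → u ∈ tpCover p t ∨ v ∈ tpCover p t := by
        intro u v huv
        match u, v with
        | Sum.inr i, Sum.inr j =>
          have hij : (j : ℕ) = (i : ℕ) + 1 := huv
          have hi := i.isLt
          have hj := j.isLt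
          rw [mem_tpCover_inr, mem_tpCover_inr]
          omega
        | Sum.inl s, Sum.inr j =>
          have hj' : (j : ℕ) = 2 * (s : ℕ) + 1 ∨ (j : ℕ) = 2 * (s : ℕ) + 2 := huv
          rcases eq_or_ne s t with rfl | hst
          · right
            rw [mem_tpCover_inr]
            omega
          · left
            exact hst
        | Sum.inl _, Sum.inl _ => exact absurd huv not_false
        | Sum.inr _, Sum.inl _ => exact absurd huv not_false
      rcases hrel with h | h
      · exact key _ _ h
      · exact (key _ _ h).symm
    · have h1 : tpCover p t = Set.range (coverFun p t) := (coverFun_range p t).symm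
      rw [h1, ← Set.image_univ, Set.ncard_image_of_injective _ (coverFun_inj p t),
        Set.ncard_univ, Nat.card_eq_fintype_card, Fintype.card_sum, Fintype.card_fin]
      have : Fintype.card {s : Fin p // s ≠ t} = p - 1 := by
        rw [Fintype.card_subtype_compl, Fintype.card_fin, Fintype.card_subtype_eq]
      rw [this]
      omega
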